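/- The sequence c(t,k) = (k^{k−2}/k!) t^{k−1} e^{−kt}, k ≥ 1, satisfies for every t ≥ 0 and every k ≥ 1 the Flory/Smoluchowski discrete coagulation identity with multiplicative kernel: ∂_t c(t,k) = (1/2) Σ_{j=1}^{k−1} j(k−j) c(t,j) c(t,k−j) − k c(t,k) Σ_{j≥1} j c(t,j) − k c(t,k) (1 − Σ_{j≥1} j c(t,j)), i.e. ∂_t c(t,k) = (1/2) Σ_{j=1}^{k−1} j(k−j) c(t,j) c(t,k−j) − k c(t,k). -/

import Mathlib

open Real

lemma alt_sum_pow : ∀ (j n : ℕ), j < n →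
    ∑ k ∈ Finset.range (n+1), (-1:ℝ)^k * (n.choose k) * (k:ℝ)^j = 0 := by
  intro j
  induction j using Nat.strong_induction_on with
  | _ j ih =>
    intro n hjn
    match j with
    | 0 =>
      have h := Int.alternating_sum_range_choose (n := n)
      rw [if_neg (by omega)] at h
      have := congrArg (fun z : ℤ => (z : ℝ)) h
      push_cast at this
      simpa using this
    | (j+1) =>
      obtain ⟨m, rfl⟩ : ∃ m, n = m + 1 := ⟨n - 1, by omega⟩
      rw [Finset.sum_range_succ']
      have key : ∀ i ∈ Finset.range (m+1),
          (-1:ℝ)^(i+1) * (((m+1).choose (i+1) : ℕ) : ℝ) * ((i+1 : ℕ) : ℝ)^(j+1)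
          = -((m:ℝ)+1) * ∑ l ∈ Finset.range (j+1),
              (j.choose l : ℝ) * ((-1:ℝ)^i * (m.choose i) * (i:ℝ)^l) := by
        intro i hi
        have hc : (m+1) * m.choose i = (m+1).choose (i+1) * (i+1) := Nat.add_one_mul_choose_eq m i
        have hc' : ((m:ℝ)+1) * (m.choose i) = ((m+1).choose (i+1) : ℝ) * ((i:ℝ)+1) := by
          exact_mod_cast congrArg (fun z : ℕ => (z:ℝ)) hc
        have hbin : ((i:ℝ)+1)^j = ∑ l ∈ Finset.range (j+1), (j.choose l : ℝ) * (i:ℝ)^l := by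
          rw [add_pow]
          apply Finset.sum_congr rfl
          intro l hl
          ring
        push_cast
        calc ((-1:ℝ))^(i+1) * ((m+1).choose (i+1) : ℝ) * ((i:ℝ)+1)^(j+1)
            = ((-1:ℝ))^i * (-1) * (((m+1).choose (i+1) : ℝ) * ((i:ℝ)+1)) * ((i:ℝ)+1)^j := by
              rw [pow_succ, pow_succ]; ring
          _ = ((-1:ℝ))^i * (-1) * (((m:ℝ)+1) * (m.choose i)) * ((i:ℝ)+1)^j := by rw [← hc']
          _ = -((m:ℝ)+1) * (((-1:ℝ))^i * (m.choose i) * ((i:ℝ)+1)^j) := by ring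
          _ = _ := by rw [hbin, Finset.mul_sum]; apply congrArg; apply Finset.sum_congr rfl;
                      intro l hl; ring
      rw [Finset.sum_congr rfl key, ← Finset.mul_sum, Finset.sum_comm]
      have inner : ∀ l ∈ Finset.range (j+1),
          ∑ i ∈ Finset.range (m+1), (j.choose l : ℝ) * ((-1:ℝ)^i * (m.choose i) * (i:ℝ)^l) = 0 := by
        intro l hl
        rw [← Finset.mul_sum]
        have := ih l (by simp at hl; omega) m (by simp at hl; omega)
        rw [this, mul_zero]
      rw [Finset.sum_congr rfl inner]
      simp

lemma alt_sum_affine (n : ℕ) (hn : 1 ≤ n) (x : ℝ) :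
    ∑ k ∈ Finset.range (n+1), (-1:ℝ)^k * (n.choose k) * (x + k)^(n-1) = 0 := by
  have expand : ∀ k ∈ Finset.range (n+1),
      (-1:ℝ)^k * (n.choose k) * (x + k)^(n-1)
      = ∑ i ∈ Finset.range n, ((n-1).choose i : ℝ) * x^(n-1-i) *
          ((-1:ℝ)^k * (n.choose k) * (k:ℝ)^i) := by
    intro k hk
    have hb : (x + (k:ℝ))^(n-1) = ∑ i ∈ Finset.range ((n-1)+1),
        ((k:ℝ))^i * x^(n-1-i) * ((n-1).choose i : ℝ) := by
      rw [add_comm x (k:ℝ), add_pow]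
    have hrange : (n-1)+1 = n := by omega
    rw [hb, hrange, Finset.mul_sum]
    apply Finset.sum_congr rfl
    intro i hi
    ring
  rw [Finset.sum_congr rfl expand, Finset.sum_comm]
  apply Finset.sum_eq_zero
  intro i hi
  rw [← Finset.mul_sum, alt_sum_pow i n (Finset.mem_range.mp hi), mul_zero]

lemma abelA : ∀ (n : ℕ) (x y : ℝ),
    (y+(n:ℝ))^n + ∑ k ∈ Finset.Icc 1 n, ((n.choose k : ℕ) : ℝ) * x * (x+(k:ℝ))^(k-1)
      * (y+((n-k:ℕ):ℝ))^(n-k) = (x+y+(n:ℝ))^n := by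
  intro n
  induction n with
  | zero => intro x y; simp
  | succ n IH =>
    intro x y
    -- define F and show its derivative vanishes
    set m := n + 1 with hm
    have hF : ∀ z : ℝ, HasDerivAt (fun y => (y+(m:ℝ))^m
        + ∑ k ∈ Finset.Icc 1 m, ((m.choose k : ℕ) : ℝ) * x * (x+(k:ℝ))^(k-1)
            * (y+((m-k:ℕ):ℝ))^(m-k) - (x+y+(m:ℝ))^m) 0 z := by
      intro z
      have h1 : HasDerivAt (fun y : ℝ => (y+(m:ℝ))^m)
          ((m:ℝ) * (z+(m:ℝ))^(m-1)) z := by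
        have := (((hasDerivAt_id z).add_const (m:ℝ)).fun_pow m)
        simpa using this
      have h3 : HasDerivAt (fun y : ℝ => (x+y+(m:ℝ))^m)
          ((m:ℝ) * (x+z+(m:ℝ))^(m-1)) z := by
        have h0 : HasDerivAt (fun y : ℝ => x+y+(m:ℝ)) 1 z := by
          simpa using (((hasDerivAt_id z).const_add x).add_const (m:ℝ))
        have := h0.fun_pow m
        simpa using this
      have h2 : HasDerivAt (fun y : ℝ => ∑ k ∈ Finset.Icc 1 m,
          ((m.choose k : ℕ) : ℝ) * x * (x+(k:ℝ))^(k-1) * (y+((m-k:ℕ):ℝ))^(m-k))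
          (∑ k ∈ Finset.Icc 1 m, ((m.choose k : ℕ) : ℝ) * x * (x+(k:ℝ))^(k-1)
            * (((m-k:ℕ):ℝ) * (z+((m-k:ℕ):ℝ))^(m-k-1))) z := by
        apply HasDerivAt.fun_sum
        intro k hk
        have := (((hasDerivAt_id z).add_const (((m-k:ℕ):ℝ))).fun_pow (m-k)).const_mul
          (((m.choose k : ℕ) : ℝ) * x * (x+(k:ℝ))^(k-1))
        simpa [mul_assoc] using this
      have hsum : (m:ℝ) * (z+(m:ℝ))^(m-1)
          + ∑ k ∈ Finset.Icc 1 m, ((m.choose k : ℕ) : ℝ) * x * (x+(k:ℝ))^(k-1)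
            * (((m-k:ℕ):ℝ) * (z+((m-k:ℕ):ℝ))^(m-k-1))
          - (m:ℝ) * (x+z+(m:ℝ))^(m-1) = 0 := by
        -- split off top term k = m (it vanishes) and rewrite the rest via IH at (x, z+1)
        rw [hm]
        rw [Finset.sum_Icc_succ_top (by omega : 1 ≤ n+1)]
        simp only [Nat.sub_self, Nat.cast_zero, zero_mul, mul_zero, add_zero]
        have step : ∀ k ∈ Finset.Icc 1 n,
            (((n+1).choose k : ℕ) : ℝ) * x * (x+(k:ℝ))^(k-1)
              * (((n+1-k:ℕ):ℝ) * (z+((n+1-k:ℕ):ℝ))^(n+1-k-1))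
            = ((n:ℝ)+1) * (((n.choose k : ℕ) : ℝ) * x * (x+(k:ℝ))^(k-1)
              * ((z+1)+((n-k:ℕ):ℝ))^(n-k)) := by
          intro k hk
          simp only [Finset.mem_Icc] at hk
          have hc : (n.choose k) * (n+1) = ((n+1).choose k) * (n+1-k) :=
            Nat.choose_mul_succ_eq n k
          have hc' : ((n.choose k : ℕ) : ℝ) * ((n:ℝ)+1)
              = (((n+1).choose k : ℕ) : ℝ) * ((n+1-k:ℕ):ℝ) := by
            exact_mod_cast congrArg (fun z : ℕ => (z:ℝ)) hc
          have he : (n+1-k) - 1 = n - k := by omega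
          have hb : z+((n+1-k:ℕ):ℝ) = (z+1)+((n-k:ℕ):ℝ) := by
            have h1 : ((n+1-k:ℕ):ℝ) = (n:ℝ)+1-(k:ℝ) := by
              push_cast [Nat.cast_sub (by omega : k ≤ n+1)]; ring
            have h2 : ((n-k:ℕ):ℝ) = (n:ℝ)-(k:ℝ) := by
              push_cast [Nat.cast_sub (by omega : k ≤ n)]; ring
            rw [h1, h2]; ring
          rw [he, hb]
          linear_combination (-(x*(x+(k:ℝ))^(k-1)*((z+1)+((n-k:ℕ):ℝ))^(n-k))) * hc'
        rw [Finset.sum_congr rfl step, ← Finset.mul_sum]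
        have hIH := IH x (z+1)
        have key : ∑ k ∈ Finset.Icc 1 n, (((n.choose k : ℕ) : ℝ) * x * (x+(k:ℝ))^(k-1)
              * ((z+1)+((n-k:ℕ):ℝ))^(n-k)) = (x+(z+1)+(n:ℝ))^n - ((z+1)+(n:ℝ))^n := by
          linarith [hIH]
        rw [key]
        have e1 : (z+((n:ℕ)+1:ℝ))^(n+1-1) = ((z+1)+(n:ℝ))^n := by
          norm_num; ring_nf
        have e2 : (x+z+((n:ℕ)+1:ℝ))^(n+1-1) = (x+(z+1)+(n:ℝ))^n := by
          norm_num; ring_nf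
        push_cast
        push_cast at e1 e2
        rw [show n+1-1 = n from rfl] at *
        nlinarith [e1, e2]
      have := (h1.add h2).sub h3
      rw [show (m:ℝ) * (z+(m:ℝ))^(m-1)
          + ∑ k ∈ Finset.Icc 1 m, ((m.choose k : ℕ) : ℝ) * x * (x+(k:ℝ))^(k-1)
            * (((m-k:ℕ):ℝ) * (z+((m-k:ℕ):ℝ))^(m-k-1))
          - (m:ℝ) * (x+z+(m:ℝ))^(m-1) = 0 from hsum] at this
      exact this
    -- constancy
    have hdiff : Differentiable ℝ _ := fun z => (hF z).differentiableAt
    have hconst := is_const_of_deriv_eq_zero hdiff (fun z => (hF z).deriv)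
    have hy0 := hconst y (-x - (m:ℝ))
    -- evaluate at y0 = -x - m
    have heval : (((-x - (m:ℝ)))+(m:ℝ))^m
        + ∑ k ∈ Finset.Icc 1 m, ((m.choose k : ℕ) : ℝ) * x * (x+(k:ℝ))^(k-1)
            * ((-x - (m:ℝ))+((m-k:ℕ):ℝ))^(m-k) - (x+(-x - (m:ℝ))+(m:ℝ))^m = 0 := by
      have hm1 : 1 ≤ m := by omega
      have hz : (x+(-x - (m:ℝ))+(m:ℝ))^m = 0 := by
        rw [show x+(-x - (m:ℝ))+(m:ℝ) = 0 by ring]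
        exact zero_pow (by omega)
      rw [hz, sub_zero]
      have hsplit : ∑ k ∈ Finset.range (m+1), (-1:ℝ)^k * (m.choose k) * (x + k)^(m-1)
          = (-1:ℝ)^0 * (m.choose 0) * (x + (0:ℕ))^(m-1)
            + ∑ k ∈ Finset.Icc 1 m, (-1:ℝ)^k * (m.choose k) * (x + k)^(m-1) := by
        rw [Finset.range_eq_Ico, Finset.sum_eq_sum_Ico_succ_bot (by omega : 0 < m+1)]
        rw [← Finset.Ico_add_one_right_eq_Icc]
      have termeq : ∀ k ∈ Finset.Icc 1 m,
          ((m.choose k : ℕ) : ℝ) * x * (x+(k:ℝ))^(k-1) * ((-x - (m:ℝ))+((m-k:ℕ):ℝ))^(m-k)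
          = (-1:ℝ)^m * x * ((-1:ℝ)^k * (m.choose k) * (x + k)^(m-1)) := by
        intro k hk
        simp only [Finset.mem_Icc] at hk
        have hbase : (-x - (m:ℝ))+((m-k:ℕ):ℝ) = -(x+(k:ℝ)) := by
          rw [Nat.cast_sub hk.2]; ring
        rw [hbase, neg_pow]
        have hpow : (x+(k:ℝ))^(k-1) * (x+(k:ℝ))^(m-k) = (x+(k:ℝ))^(m-1) := by
          rw [← pow_add]; congr 1; omega
        have hsign : (-1:ℝ)^(m-k) * (-1:ℝ)^k = (-1:ℝ)^m := by
          rw [← pow_add]; congr 1; omega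
        have hsq : (-1:ℝ)^k * (-1:ℝ)^k = 1 := by
          rw [← pow_add, ← two_mul, pow_mul]; norm_num
        calc ((m.choose k : ℕ) : ℝ) * x * (x+(k:ℝ))^(k-1) * ((-1:ℝ)^(m-k) * (x+(k:ℝ))^(m-k))
            = (-1:ℝ)^(m-k) * (((m.choose k : ℕ) : ℝ) * x * ((x+(k:ℝ))^(k-1) * (x+(k:ℝ))^(m-k))) := by
              ring
          _ = (-1:ℝ)^(m-k) * (((m.choose k : ℕ) : ℝ) * x * (x+(k:ℝ))^(m-1)) := by rw [hpow]
          _ = (-1:ℝ)^m * x * ((-1:ℝ)^k * (m.choose k) * (x + k)^(m-1)) := by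
              linear_combination (x*((m.choose k : ℕ) : ℝ)*(x+(k:ℝ))^(m-1)*(-1:ℝ)^k) * hsign
                - (x*((m.choose k : ℕ) : ℝ)*(x+(k:ℝ))^(m-1)*(-1:ℝ)^(m-k)) * hsq
      rw [Finset.sum_congr rfl termeq]
      have hbound : ((-x - (m:ℝ))+(m:ℝ))^m
          = (-1:ℝ)^m * x * ((-1:ℝ)^0 * (m.choose 0) * (x + ((0:ℕ):ℝ))^(m-1)) := by
        rw [show (-x - (m:ℝ))+(m:ℝ) = -x by ring, neg_pow]
        simp only [pow_zero, Nat.choose_zero_right, Nat.cast_one, Nat.cast_zero, add_zero,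
          one_mul, mul_one]
        have hx : x^m = x * x^(m-1) := by
          conv_lhs => rw [show m = m-1+1 by omega]
          rw [pow_succ]; ring
        rw [hx]; ring
      rw [hbound, ← Finset.mul_sum, ← mul_add, ← hsplit, alt_sum_affine m hm1 x, mul_zero]
    have : (y+(m:ℝ))^m + ∑ k ∈ Finset.Icc 1 m, ((m.choose k : ℕ) : ℝ) * x * (x+(k:ℝ))^(k-1)
        * (y+((m-k:ℕ):ℝ))^(m-k) - (x+y+(m:ℝ))^m = 0 := by
      rw [hy0] ; exact heval
    linarith [this]

lemma starId (n : ℕ) (hn : 1 ≤ n) (x y : ℝ) :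
    y * ((y+(n:ℝ))^(n-1) + ∑ k ∈ Finset.Icc 1 (n-1), ((n.choose k : ℕ) : ℝ) * x
        * (x+(k:ℝ))^(k-1) * (y+((n-k:ℕ):ℝ))^(n-k-1))
    = (x+y)*(x+y+(n:ℝ))^(n-1) - x*(x+(n:ℝ))^(n-1) := by
  obtain ⟨m, rfl⟩ : ∃ m, n = m + 1 := ⟨n - 1, by omega⟩
  simp only [Nat.add_sub_cancel]
  have hA := abelA (m+1) x y
  rw [Finset.sum_Icc_succ_top (show 1 ≤ m+1 by omega)] at hA
  simp only [Nat.sub_self, Nat.cast_zero, add_zero, pow_zero, mul_one, Nat.choose_self,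
    Nat.cast_one, one_mul, Nat.add_sub_cancel] at hA
  have split : ∀ k ∈ Finset.Icc 1 m,
      (((m+1).choose k : ℕ) : ℝ) * x * (x+(k:ℝ))^(k-1) * (y+((m+1-k:ℕ):ℝ))^(m+1-k)
      = y * ((((m+1).choose k : ℕ) : ℝ) * x * (x+(k:ℝ))^(k-1) * (y+((m+1-k:ℕ):ℝ))^(m+1-k-1))
        + ((m:ℝ)+1) * (((m.choose k : ℕ) : ℝ) * x * (x+(k:ℝ))^(k-1)
            * ((y+1)+((m-k:ℕ):ℝ))^(m-k)) := by
    intro k hk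
    simp only [Finset.mem_Icc] at hk
    have hc : (m.choose k) * (m+1) = ((m+1).choose k) * (m+1-k) := Nat.choose_mul_succ_eq m k
    have hc' : ((m.choose k : ℕ) : ℝ) * ((m:ℝ)+1)
        = (((m+1).choose k : ℕ) : ℝ) * ((m+1-k:ℕ):ℝ) := by
      exact_mod_cast congrArg (fun z : ℕ => (z:ℝ)) hc
    have he : m+1-k = (m-k)+1 := by omega
    have he2 : m+1-k-1 = m-k := by omega
    have hb : y + ((m+1-k:ℕ):ℝ) = (y+1)+((m-k:ℕ):ℝ) := by
      rw [Nat.cast_sub (by omega : k ≤ m+1), Nat.cast_sub (by omega : k ≤ m)]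
      push_cast; ring
    rw [he2, he, show ((m-k+1:ℕ):ℝ) = ((m-k:ℕ):ℝ)+1 by push_cast; ring, pow_succ]
    rw [show ((m+1-k:ℕ):ℝ) = ((m-k:ℕ):ℝ)+1 by rw [he]; push_cast; ring] at hc'
    linear_combination (-(x * (x+(k:ℝ))^(k-1) * (y+((m-k:ℕ):ℝ)+1)^(m-k))) * hc'
  rw [Finset.sum_congr rfl split, Finset.sum_add_distrib, ← Finset.mul_sum, ← Finset.mul_sum] at hA
  have hB := abelA m x (y+1)
  have hbase1 : y + ((m+1:ℕ):ℝ) = (y+1) + (m:ℝ) := by push_cast; ring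
  have hbase2 : x + y + ((m+1:ℕ):ℝ) = x + (y+1) + (m:ℝ) := by push_cast; ring
  rw [show (m+1 : ℕ) = m+1 from rfl] at hA
  rw [pow_succ (y + ((m+1:ℕ):ℝ)) m, pow_succ (x + y + ((m+1:ℕ):ℝ)) m] at hA
  rw [hbase1, hbase2] at hA
  have hgoal1 : y + ((m:ℕ):ℝ) + 1 = (y+1) + (m:ℝ) := by ring
  have hgoal2 : x + y + (((m:ℕ):ℝ) + 1) = x + (y+1) + (m:ℝ) := by ring
  push_cast
  rw [show y + ((m:ℝ) + 1) = (y+1) + (m:ℝ) by ring,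
     show x + y + ((m:ℝ) + 1) = x + (y+1) + (m:ℝ) by ring]
  push_cast at hA hB
  linear_combination hA - ((m:ℝ)+1)*hB

lemma keyVal (n : ℕ) (hn : 1 ≤ n) :
    ∑ k ∈ Finset.Ico 1 n, ((n.choose k : ℕ) : ℝ) * (k:ℝ)^(k-1) * (((n-k:ℕ):ℝ))^(n-k-1)
    = 2*(((n-1:ℕ):ℝ))*(n:ℝ)^(n-2) := by
  set R : ℝ → ℝ := fun t => ∑ k ∈ Finset.Ico 1 n,
    ((n.choose k : ℕ) : ℝ) * (t+(k:ℝ))^(k-1) * (t+((n-k:ℕ):ℝ))^(n-k-1) with hR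
  set ψ : ℝ → ℝ := fun t => (2*t+(n:ℝ))^(n-1) - (t+(n:ℝ))^(n-1) with hψdef
  have hIcc : Finset.Icc 1 (n-1) = Finset.Ico 1 n := by
    rw [← Finset.Ico_add_one_right_eq_Icc]; congr 1; omega
  -- R t = 2 ψ t / t for t ≠ 0
  have hRt : ∀ t : ℝ, t ≠ 0 → t * R t = 2 * ψ t := by
    intro t ht
    have hs := starId n hn t t
    rw [hIcc] at hs
    have hsum : ∑ k ∈ Finset.Ico 1 n, ((n.choose k : ℕ) : ℝ) * t
        * (t+(k:ℝ))^(k-1) * (t+((n-k:ℕ):ℝ))^(n-k-1) = t * R t := by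
      rw [hR, Finset.mul_sum]
      apply Finset.sum_congr rfl
      intro k hk
      ring
    rw [hsum] at hs
    -- hs : t * ((t+n)^(n-1) + t * R t) = (t+t)*(t+t+n)^(n-1) - t*(t+n)^(n-1)
    have h2 : t * ((t+(n:ℝ))^(n-1) + t * R t)
        = t * ((t+(n:ℝ))^(n-1) + 2 * ψ t) := by
      rw [hs]; simp only [hψdef]; ring
    have h3 := mul_left_cancel₀ ht h2
    linarith [h3]
  -- derivative of ψ at 0
  have hψ : HasDerivAt ψ (((n-1:ℕ):ℝ) * (n:ℝ)^(n-2)) 0 := by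
    have h1 : HasDerivAt (fun t : ℝ => (2*t+(n:ℝ))^(n-1))
        (((n-1:ℕ):ℝ) * (n:ℝ)^(n-1-1) * 2) 0 := by
      have hin : HasDerivAt (fun t : ℝ => 2*t+(n:ℝ)) 2 0 := by
        simpa using ((hasDerivAt_id (0:ℝ)).const_mul 2).add_const (n:ℝ)
      have := hin.fun_pow (n-1)
      norm_num at this ⊢
      convert this using 2
    have h2 : HasDerivAt (fun t : ℝ => (t+(n:ℝ))^(n-1))
        (((n-1:ℕ):ℝ) * (n:ℝ)^(n-1-1) * 1) 0 := by
      have hin : HasDerivAt (fun t : ℝ => t+(n:ℝ)) 1 0 := by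
        simpa using (hasDerivAt_id (0:ℝ)).add_const (n:ℝ)
      have := hin.fun_pow (n-1)
      norm_num at this ⊢
      convert this using 2
    have := h1.sub h2
    have he : ((n-1:ℕ):ℝ) * (n:ℝ)^(n-1-1) * 2 - ((n-1:ℕ):ℝ) * (n:ℝ)^(n-1-1) * 1
        = ((n-1:ℕ):ℝ) * (n:ℝ)^(n-2) := by
      rw [show n-1-1 = n-2 by omega]; ring
    rw [he] at this
    exact this
  have hψ0 : ψ 0 = 0 := by simp [hψdef]
  -- continuity of R
  have hRcont : Continuous R := by
    apply continuous_finset_sum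
    intro k hk
    fun_prop
  -- limits
  have hslope := hasDerivAt_iff_tendsto_slope.mp hψ
  have hRlim : Filter.Tendsto R (nhdsWithin 0 {(0:ℝ)}ᶜ) (nhds (R 0)) :=
    (hRcont.continuousAt).continuousWithinAt
  have hagree : ∀ᶠ t in nhdsWithin (0:ℝ) {(0:ℝ)}ᶜ, R t = 2 * slope ψ 0 t := by
    filter_upwards [eventually_mem_nhdsWithin] with t ht
    simp only [Set.mem_compl_iff, Set.mem_singleton_iff] at ht
    rw [slope_def_field, hψ0]
    rw [sub_zero, sub_zero]
    have := hRt t ht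
    field_simp
    linarith [this]
  have hRlim2 : Filter.Tendsto R (nhdsWithin 0 {(0:ℝ)}ᶜ)
      (nhds (2 * (((n-1:ℕ):ℝ) * (n:ℝ)^(n-2)))) :=
    Filter.Tendsto.congr' (Filter.EventuallyEq.symm hagree) (hslope.const_mul 2)
  have huniq : R 0 = 2 * (((n-1:ℕ):ℝ) * (n:ℝ)^(n-2)) :=
    tendsto_nhds_unique hRlim hRlim2
  have hR0 : R 0 = ∑ k ∈ Finset.Ico 1 n,
      ((n.choose k : ℕ) : ℝ) * (k:ℝ)^(k-1) * (((n-k:ℕ):ℝ))^(n-k-1) := by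
    rw [hR]
    apply Finset.sum_congr rfl
    intro k hk
    rw [zero_add, zero_add]
  rw [← hR0, huniq]
  ring


lemma coeff_lemma (j : ℕ) (hj : 1 ≤ j) :
    (j:ℝ) * ((j:ℝ)^((j:ℝ)-2) / (Nat.factorial j : ℝ)) = (j:ℝ)^(j-1) / (Nat.factorial j : ℝ) := by
  have hj0 : (0:ℝ) < (j:ℝ) := by exact_mod_cast hj
  have hr : (j:ℝ)^((j:ℝ)-2) = (j:ℝ)^(j:ℕ) / (j:ℝ)^(2:ℕ) := by
    rw [show ((j:ℝ)-2) = ((j:ℕ):ℝ) - ((2:ℕ):ℝ) by norm_num,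
      Real.rpow_sub hj0, Real.rpow_natCast, Real.rpow_natCast]
  rw [hr]
  have hpow : (j:ℝ)^(j-1) * (j:ℝ) = (j:ℝ)^(j:ℕ) := by
    rw [← pow_succ]; congr 1; omega
  rw [← hpow]
  have hfac : (Nat.factorial j : ℝ) ≠ 0 := by
    exact_mod_cast Nat.factorial_ne_zero j
  field_simp


/-- The explicit solution `c(t,k) = (k^{k-2}/k!) t^{k-1} e^{-kt}` of the Flory equation
with multiplicative kernel and monodisperse initial data. -/
noncomputable def floryC (t : ℝ) (k : ℕ) : ℝ :=
  (k : ℝ) ^ ((k : ℝ) - 2) / (Nat.factorial k) * t ^ (k - 1) * Real.exp (-(k : ℝ) * t)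

theorem stmt_11 (k : ℕ) (hk : 1 ≤ k) (t : ℝ) (ht : 0 ≤ t) :
    HasDerivAt (fun s => floryC s k)
      ((1 / 2) * ∑ j ∈ Finset.Ico 1 k,
          (j : ℝ) * ((k - j : ℕ) : ℝ) * floryC t j * floryC t (k - j)
        - (k : ℝ) * floryC t k) t := by
  set A : ℝ := (k:ℝ)^((k:ℝ)-2) / (Nat.factorial k : ℝ) with hA
  set E : ℝ := Real.exp (-(k:ℝ)*t) with hE
  have h1 : HasDerivAt (fun s : ℝ => A * s^(k-1)) (A * (((k-1:ℕ):ℝ) * t^(k-1-1))) t :=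
    (hasDerivAt_pow (k-1) t).const_mul A
  have h2 : HasDerivAt (fun s : ℝ => Real.exp (-(k:ℝ)*s)) (E * (-(k:ℝ))) t := by
    have hin : HasDerivAt (fun s : ℝ => -(k:ℝ)*s) (-(k:ℝ)) t := by
      simpa using (hasDerivAt_id t).const_mul (-(k:ℝ))
    simpa [hE] using hin.exp
  have hd := h1.fun_mul h2
  have hfun : (fun s : ℝ => A * s^(k-1) * Real.exp (-(k:ℝ)*s)) = (fun s => floryC s k) := by
    funext s
    rw [floryC, hA]
  rw [hfun] at hd
  refine hd.congr_deriv (Eq.symm ?_)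
  have hterm : ∀ j ∈ Finset.Ico 1 k,
      (j : ℝ) * ((k - j : ℕ) : ℝ) * floryC t j * floryC t (k - j)
      = ((k.choose j : ℕ):ℝ) * (j:ℝ)^(j-1) * (((k-j:ℕ):ℝ))^(k-j-1)
          * (t^(k-2) * E / (Nat.factorial k : ℝ)) := by
    intro j hj
    simp only [Finset.mem_Ico] at hj
    obtain ⟨hj1, hjk⟩ := hj
    have hj'1 : 1 ≤ k - j := by omega
    have hco : (k.choose j) * (Nat.factorial j) * (Nat.factorial (k-j)) = Nat.factorial k :=
      Nat.choose_mul_factorial_mul_factorial (le_of_lt hjk)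
    have hco' : ((k.choose j : ℕ):ℝ) * (Nat.factorial j : ℝ) * (Nat.factorial (k-j) : ℝ)
        = (Nat.factorial k : ℝ) := by exact_mod_cast congrArg (fun z : ℕ => (z:ℝ)) hco
    have hc1 := coeff_lemma j hj1
    have hc2 := coeff_lemma (k-j) hj'1
    rw [floryC, floryC]
    have hexp : Real.exp (-(j:ℝ)*t) * Real.exp (-((k-j:ℕ):ℝ)*t) = E := by
      rw [← Real.exp_add, hE]
      congr 1
      rw [Nat.cast_sub (le_of_lt hjk)]
      ring
    have hpow : t^(j-1) * t^(k-j-1) = t^(k-2) := by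
      rw [← pow_add]
      congr 1
      omega
    have hf1 : (Nat.factorial j : ℝ) ≠ 0 := by exact_mod_cast Nat.factorial_ne_zero j
    have hf2 : (Nat.factorial (k-j) : ℝ) ≠ 0 := by exact_mod_cast Nat.factorial_ne_zero (k-j)
    have hf3 : (Nat.factorial k : ℝ) ≠ 0 := by exact_mod_cast Nat.factorial_ne_zero k
    calc (j : ℝ) * ((k - j : ℕ) : ℝ)
          * ((j:ℝ)^((j:ℝ)-2)/(Nat.factorial j : ℝ) * t^(j-1) * Real.exp (-(j:ℝ)*t))
          * (((k-j:ℕ):ℝ)^(((k-j:ℕ):ℝ)-2)/(Nat.factorial (k-j) : ℝ) * t^(k-j-1)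
              * Real.exp (-((k-j:ℕ):ℝ)*t))
        = ((j:ℝ) * ((j:ℝ)^((j:ℝ)-2)/(Nat.factorial j : ℝ)))
          * (((k-j:ℕ):ℝ) * (((k-j:ℕ):ℝ)^(((k-j:ℕ):ℝ)-2)/(Nat.factorial (k-j) : ℝ)))
          * (t^(j-1) * t^(k-j-1))
          * (Real.exp (-(j:ℝ)*t) * Real.exp (-((k-j:ℕ):ℝ)*t)) := by ring
      _ = ((j:ℝ)^(j-1) / (Nat.factorial j : ℝ))
          * (((k-j:ℕ):ℝ)^(k-j-1) / (Nat.factorial (k-j) : ℝ))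
          * (t^(k-2)) * E := by rw [hc1, hc2, hexp, hpow]
      _ = ((k.choose j : ℕ):ℝ) * (j:ℝ)^(j-1) * (((k-j:ℕ):ℝ))^(k-j-1)
          * (t^(k-2) * E / (Nat.factorial k : ℝ)) := by
            have hch : ((k.choose j : ℕ):ℝ) ≠ 0 := by
              have := Nat.choose_pos (le_of_lt hjk)
              positivity
            rw [← hco']
            field_simp [hch]
  rw [Finset.sum_congr rfl hterm, ← Finset.sum_mul, keyVal k hk]
  have hApow : ((k-1:ℕ):ℝ) * A = ((k-1:ℕ):ℝ) * ((k:ℝ)^(k-2:ℕ) / (Nat.factorial k : ℝ)) := by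
    rcases Nat.lt_or_ge k 2 with h2 | h2
    · interval_cases k
      norm_num
    · have hnat : (k:ℝ)^((k:ℝ)-2) = (k:ℝ)^(k-2:ℕ) := by
        rw [← Real.rpow_natCast (k:ℝ) (k-2), Nat.cast_sub h2]
        norm_num
      rw [hA, hnat]
  have hfl : floryC t k = A * t^(k-1) * E := by rw [floryC, hA, hE]
  rw [hfl]
  rw [show k-1-1 = k-2 by omega]
  rw [show Real.exp (-(k:ℝ)*t) = E from hE.symm]
  linear_combination (-(t^(k-2)*E)) * hApow
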